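/- For all n ≥ 0, the number of permutations of length n avoiding both 132 and the increasing pattern 12⋯k equals the number of Dyck paths of semilength n and height at most k−1. -/

import Mathlib

def Avoids132 {n : ℕ} (π : Fin n → Fin n) : Prop :=
  ¬ ∃ i j k : Fin n, i < j ∧ j < k ∧ π i < π k ∧ π k < π j

/-- `l` (with `true` an up step and `false` a down step) is a Dyck word. -/
def IsDyckWord (l : List Bool) : Prop :=
  (∀ m, (l.take m).count false ≤ (l.take m).count true) ∧
    l.count false = l.count true

open List DyckStep


/-- The counting function: `cnt n h` = number of Dyck paths of semilength `n` and height ≤ `h`. -/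
def cnt : ℕ → ℕ → ℕ
  | 0, _ => 1
  | n+1, 0 => 0
  | n+1, h+1 => ∑ m ∈ Finset.range (n+1), cnt (min m n) h * cnt (n - m) (h+1)

/-- Height bound predicate on Dyck words. -/
instance : Fintype DyckStep := ⟨{U, D}, by intro s; cases s <;> simp⟩

lemma cnt_zero (h : ℕ) : cnt 0 h = 1 := by simp [cnt]
lemma cnt_succ_zero (n : ℕ) : cnt (n+1) 0 = 0 := by simp [cnt]
lemma cnt_succ_succ (n h : ℕ) :
    cnt (n+1) (h+1) = ∑ m ∈ Finset.range (n+1), cnt (min m n) h * cnt (n - m) (h+1) := by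
  rw [cnt]

def Bnd (h : ℕ) (p : DyckWord) : Prop :=
  ∀ i, (p.toList.take i).count U ≤ (p.toList.take i).count D + h

lemma bnd_zero (h : ℕ) : Bnd h 0 := by
  intro i
  show count U (List.take i []) ≤ count D (List.take i []) + h
  simp

lemma bnd_nest_add (a b : DyckWord) (h : ℕ) :
    Bnd (h+1) (a.nest + b) ↔ Bnd h a ∧ Bnd (h+1) b := by
  have hlist : (a.nest + b).toList = U :: (a.toList ++ (D :: b.toList)) := by
    show ([U] ++ a.toList ++ [D]) ++ b.toList = _
    simp
  have hab := a.count_U_eq_count_D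
  constructor
  · intro H
    constructor
    · intro i
      have := H (i + 1)
      rw [hlist, take_succ_cons, count_cons, count_cons] at this
      rcases le_or_gt i a.toList.length with hi | hi
      · rw [take_append_of_le_length hi] at this
        simp at this
        omega
      · have := H (a.toList.length + 1)
        rw [hlist, take_succ_cons, take_append_of_le_length le_rfl,
          take_of_length_le le_rfl, count_cons, count_cons] at this
        have h2 := a.count_D_le_count_U i
        rw [take_of_length_le hi.le] at *
        simp at this
        omega
    · intro i
      have := H (a.toList.length + 1 + i + 1)
      rw [hlist, take_succ_cons, take_append,
        take_of_length_le (by omega), count_cons, count_cons,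
        show a.toList.length + 1 + i - a.toList.length = i + 1 by omega,
        take_succ_cons, count_append, count_append, count_cons, count_cons] at this
      simp at this
      omega
  · rintro ⟨Ha, Hb⟩ i
    rcases Nat.eq_zero_or_pos i with rfl | hi
    · simp
    obtain ⟨j, rfl⟩ : ∃ j, i = j + 1 := ⟨i - 1, by omega⟩
    rw [hlist, take_succ_cons, count_cons, count_cons]
    rcases le_or_gt j a.toList.length with hj | hj
    · rw [take_append_of_le_length hj]
      have := Ha j
      simp
      omega
    · rw [take_append, take_of_length_le hj.le]
      obtain ⟨i', hii⟩ : ∃ i', j - a.toList.length = i' + 1 := ⟨j - a.toList.length - 1, by omega⟩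
      rw [hii, take_succ_cons, count_append, count_append, count_cons, count_cons]
      have := Hb i'
      have := a.count_D_le_count_U a.toList.length
      simp
      omega

lemma finite_of_length {α : Type*} [Finite α] [Inhabited α] (m : ℕ) (P : List α → Prop)
    (hP : ∀ l, P l → l.length = m) : Finite {l : List α // P l} := by
  apply Finite.of_injective (fun (l : {l : List α // P l}) (i : Fin m) =>
    l.1.get ⟨i, by rw [hP l.1 l.2]; exact i.2⟩)
  rintro ⟨l1, h1⟩ ⟨l2, h2⟩ hf
  ext1
  apply List.ext_get (by rw [hP _ h1, hP _ h2])
  intro i hi1 hi2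
  exact congrFun hf ⟨i, by rw [← hP _ h1]; exact hi1⟩

instance finS (n h : ℕ) : Finite {p : DyckWord // p.semilength = n ∧ Bnd h p} := by
  have : Finite {l : List DyckStep // ∃ p : DyckWord, p.toList = l ∧ p.semilength = n ∧ Bnd h p} :=
    finite_of_length (2 * n) _ (by
      rintro l ⟨p, rfl, hp, -⟩
      rw [← DyckWord.two_mul_semilength_eq_length, hp])
  apply Finite.of_injective (fun p => (⟨p.1.toList, p.1, rfl, p.2⟩ : {l : List DyckStep //
    ∃ p : DyckWord, p.toList = l ∧ p.semilength = n ∧ Bnd h p}))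
  rintro ⟨p1, h1⟩ ⟨p2, h2⟩ hf
  ext1
  ext1
  simpa using hf

lemma semilength_eq_zero {p : DyckWord} (hp : p.semilength = 0) : p = 0 := by
  have := p.two_mul_semilength_eq_length
  rw [hp] at this
  rw [← DyckWord.toList_eq_nil]
  exact List.length_eq_zero_iff.mp this.symm

private def DS (n h : ℕ) : Type := {p : DyckWord // p.semilength = n ∧ Bnd h p}

instance finDS (n h : ℕ) : Finite (DS n h) := finS n h

def dyckJoin (n h : ℕ) (x : Σ m : Fin (n+1), DS m h × DS (n - m) (h+1)) : DS (n+1) (h+1) :=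
  ⟨x.2.1.1.nest + x.2.2.1, by
      rw [DyckWord.semilength_add, DyckWord.semilength_nest, x.2.1.2.1, x.2.2.2.1]
      have := x.1.2
      omega,
    (bnd_nest_add _ _ h).mpr ⟨x.2.1.2.2, x.2.2.2.2⟩⟩

lemma dyck_card : ∀ n h, Nat.card {p : DyckWord // p.semilength = n ∧ Bnd h p} = cnt n h := by
  intro n
  induction n using Nat.strong_induction_on with
  | _ n IH =>
  match n with
  | 0 =>
    intro h
    rw [cnt_zero, Nat.card_eq_one_iff_unique]
    constructor
    · constructor
      rintro ⟨p, hp, -⟩ ⟨q, hq, -⟩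
      simp [semilength_eq_zero hp, semilength_eq_zero hq]
    · exact ⟨0, rfl, bnd_zero h⟩
  | n + 1 =>
    intro h
    match h with
    | 0 =>
      rw [cnt_succ_zero]
      have : IsEmpty {p : DyckWord // p.semilength = n + 1 ∧ Bnd 0 p} := by
        constructor
        rintro ⟨p, hp, hb⟩
        have hne : p ≠ 0 := fun e => by simp [e] at hp
        have h1 := hb 1
        have h2 := p.cons_tail_dropLast_concat hne
        rw [← h2] at h1
        simp at h1
      exact Nat.card_of_isEmpty
    | h + 1 =>
      classical
      show Nat.card (DS (n+1) (h+1)) = _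
      have hF : Function.Bijective (dyckJoin n h) := by
        constructor
        · rintro ⟨m, ⟨a, ha1, ha2⟩, ⟨b, hb1, hb2⟩⟩ ⟨m', ⟨a', ha1', ha2'⟩, ⟨b', hb1', hb2'⟩⟩ hfe
          have he : a.nest + b = a'.nest + b' := congrArg Subtype.val hfe
          have hea : a = a' := by
            have h1 := DyckWord.insidePart_add (p := a.nest) (q := b) DyckWord.nest_ne_zero
            have h2 := DyckWord.insidePart_add (p := a'.nest) (q := b') DyckWord.nest_ne_zero
            rw [he] at h1
            rw [h1] at h2
            simpa using h2
          have heb : b = b' := by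
            have h1 := DyckWord.outsidePart_add (p := a.nest) (q := b) DyckWord.nest_ne_zero
            have h2 := DyckWord.outsidePart_add (p := a'.nest) (q := b') DyckWord.nest_ne_zero
            rw [he] at h1
            rw [h1] at h2
            simpa [hea] using h2
          have hm : m = m' := by
            ext
            rw [← ha1, ← ha1', hea]
          subst hm
          subst hea
          subst heb
          rfl
        · rintro ⟨p, hp, hb⟩
          have hne : p ≠ 0 := fun e => by simp [e] at hp
          have hdec := DyckWord.nest_insidePart_add_outsidePart hne
          have hsum := DyckWord.semilength_insidePart_add_semilength_outsidePart_add_one hne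
          rw [hp] at hsum
          have hbnd : Bnd (h+1) (p.insidePart.nest + p.outsidePart) := by rwa [hdec]
          obtain ⟨hba, hbb⟩ := (bnd_nest_add _ _ h).mp hbnd
          refine ⟨⟨⟨p.insidePart.semilength, by omega⟩,
            ⟨p.insidePart, rfl, hba⟩, ⟨p.outsidePart, by simp; omega, hbb⟩⟩, ?_⟩
          exact Subtype.ext hdec
      rw [← Nat.card_eq_of_bijective _ hF]
      letI : ∀ a b, Fintype (DS a b) := fun a b => Fintype.ofFinite _
      rw [Nat.card_eq_fintype_card, Fintype.card_sigma]
      simp_rw [Fintype.card_prod, ← Nat.card_eq_fintype_card]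
      rw [cnt_succ_succ,
        ← Fin.sum_univ_eq_sum_range (fun m => cnt (min m n) h * cnt (n - m) (h+1))]
      apply Finset.sum_congr rfl
      intro m _
      have hm : (m : ℕ) ≤ n := by omega
      rw [min_eq_left hm]
      have h1 : Nat.card (DS (↑m) h) = cnt (↑m) h := IH m (by omega) h
      have h2 : Nat.card (DS (n - ↑m) (h+1)) = cnt (n - ↑m) (h+1) := IH (n - m) (by omega) (h+1)
      rw [h1, h2]

def sb : DyckStep → Bool | U => true | D => false
def bs : Bool → DyckStep | true => U | false => D

lemma sb_inj : Function.Injective sb := by rintro ⟨⟩ ⟨⟩ h <;> simp [sb] at * <;> rfl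
lemma bs_sb (s : DyckStep) : bs (sb s) = s := by cases s <;> rfl
lemma sb_bs (b : Bool) : sb (bs b) = b := by cases b <;> rfl

lemma bs_inj : Function.Injective bs := by rintro ⟨⟩ ⟨⟩ h <;> simp [bs] at * <;> rfl

lemma count_take_map_bs (l : List Bool) (m : ℕ) :
    ((l.map bs).take m).count D = (l.take m).count false ∧
      ((l.map bs).take m).count U = (l.take m).count true := by
  rw [← List.map_take]
  constructor
  · rw [show D = bs false from rfl]
    exact List.count_map_of_injective _ bs bs_inj _
  · rw [show U = bs true from rfl]
    exact List.count_map_of_injective _ bs bs_inj _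

/-- Make a DyckWord from a bool Dyck word. -/
def mkDW (n h : ℕ)
    (x : {l : List Bool // l.length = 2 * n ∧ IsDyckWord l ∧
      ∀ m, (l.take m).count true ≤ (l.take m).count false + h}) :
    {p : DyckWord // p.semilength = n ∧ Bnd h p} := by
  obtain ⟨l, hl, ⟨hd1, hd2⟩, hh⟩ := x
  have hfull := count_take_map_bs l (l.map bs).length
  rw [List.take_of_length_le le_rfl, List.length_map, List.take_of_length_le le_rfl] at hfull
  refine ⟨⟨l.map bs, by rw [hfull.1, hfull.2, hd2], fun m => by
      rw [(count_take_map_bs l m).1, (count_take_map_bs l m).2]; exact hd1 m⟩, ?_, fun m => by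
      show ((l.map bs).take m).count U ≤ ((l.map bs).take m).count D + h
      rw [(count_take_map_bs l m).1, (count_take_map_bs l m).2]; exact hh m⟩
  show (l.map bs).count U = n
  rw [hfull.2]
  have : l.length = l.count true + l.count false := by
    rw [List.length_eq_countP_add_countP (· == true) (l := l), List.count, List.count]
    congr 1
    apply List.countP_congr
    intro b _
    cases b <;> simp
  omega

lemma toList_mkDW (n h : ℕ) (x) : (mkDW n h x).1.toList = x.1.map bs := by
  obtain ⟨l, hl, ⟨hd1, hd2⟩, hh⟩ := x
  rfl

lemma bool_card (n h : ℕ) :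
    Nat.card {l : List Bool // l.length = 2 * n ∧ IsDyckWord l ∧
      ∀ m, (l.take m).count true ≤ (l.take m).count false + h} = cnt n h := by
  rw [← dyck_card n h]
  apply Nat.card_eq_of_bijective (mkDW n h)
  constructor
  · intro x y hf
    have : (mkDW n h x).1.toList = (mkDW n h y).1.toList := by rw [hf]
    rw [toList_mkDW, toList_mkDW] at this
    exact Subtype.ext (List.map_injective_iff.mpr bs_inj this)
  · rintro ⟨p, hp, hb⟩
    have hcnt : ∀ m, ((p.toList.map sb).take m).count false = (p.toList.take m).count D ∧
        ((p.toList.map sb).take m).count true = (p.toList.take m).count U := by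
      intro m
      rw [← List.map_take]
      constructor
      · rw [show false = sb D from rfl]
        exact List.count_map_of_injective _ sb sb_inj D
      · rw [show true = sb U from rfl]
        exact List.count_map_of_injective _ sb sb_inj U
    have hfull := hcnt (p.toList.map sb).length
    rw [List.take_of_length_le le_rfl, List.length_map, List.take_of_length_le le_rfl] at hfull
    refine ⟨⟨p.toList.map sb, by
        rw [List.length_map, ← DyckWord.two_mul_semilength_eq_length, hp],
        ⟨fun m => by rw [(hcnt m).1, (hcnt m).2]; exact p.count_D_le_count_U m, by
          rw [hfull.1, hfull.2, p.count_U_eq_count_D]⟩,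
        fun m => by rw [(hcnt m).1, (hcnt m).2]; exact hb m⟩, ?_⟩
    refine Subtype.ext (DyckWord.ext ?_)
    rw [toList_mkDW]
    show (p.toList.map sb).map bs = p.toList
    have hcmp : bs ∘ sb = id := funext bs_sb
    rw [List.map_map, hcmp, List.map_id]

/-! ### Permutation side -/

def NoInc (k N : ℕ) (π : Fin N → Fin N) : Prop :=
  ¬ ∃ f : Fin k → Fin N, StrictMono f ∧ StrictMono (π ∘ f)

variable {n m0 : ℕ}

def joinFun (n m0 : ℕ) (hm : m0 ≤ n) (σ : Equiv.Perm (Fin m0))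
    (τ : Equiv.Perm (Fin (n - m0))) : Fin (n+1) → Fin (n+1) :=
  fun i => if hi : (i : ℕ) < m0 then
      ⟨(σ ⟨i, hi⟩ : ℕ) + (n - m0), by have := (σ ⟨i, hi⟩).2; omega⟩
    else if hi2 : (i : ℕ) = m0 then ⟨n, by omega⟩
    else
      have hj : (i : ℕ) - (m0+1) < n - m0 := by have := i.2; omega
      ⟨(τ ⟨(i : ℕ) - (m0+1), hj⟩ : ℕ), by
        have h2 := (τ ⟨(i : ℕ) - (m0+1), hj⟩).2; omega⟩

lemma joinFun_lt (hm : m0 ≤ n) (σ : Equiv.Perm (Fin m0)) (τ : Equiv.Perm (Fin (n - m0)))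
    (i : Fin (n+1)) (hi : (i : ℕ) < m0) :
    (joinFun n m0 hm σ τ i : ℕ) = (σ ⟨i, hi⟩ : ℕ) + (n - m0) := by
  simp only [joinFun, dif_pos hi]

lemma joinFun_eq (hm : m0 ≤ n) (σ : Equiv.Perm (Fin m0)) (τ : Equiv.Perm (Fin (n - m0)))
    (i : Fin (n+1)) (hi : (i : ℕ) = m0) :
    (joinFun n m0 hm σ τ i : ℕ) = n := by
  simp only [joinFun, dif_neg (by omega : ¬ (i : ℕ) < m0), dif_pos hi]

lemma joinFun_gt (hm : m0 ≤ n) (σ : Equiv.Perm (Fin m0)) (τ : Equiv.Perm (Fin (n - m0)))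
    (i : Fin (n+1)) (hi : m0 < (i : ℕ)) :
    (joinFun n m0 hm σ τ i : ℕ) =
      (τ ⟨(i : ℕ) - (m0+1), by have := i.2; omega⟩ : ℕ) := by
  simp only [joinFun, dif_neg (by omega : ¬ (i : ℕ) < m0), dif_neg (by omega : ¬ (i : ℕ) = m0)]

lemma joinFun_lt_range (hm : m0 ≤ n) (σ : Equiv.Perm (Fin m0)) (τ : Equiv.Perm (Fin (n - m0)))
    (i : Fin (n+1)) (hi : (i : ℕ) < m0) :
    n - m0 ≤ (joinFun n m0 hm σ τ i : ℕ) ∧ (joinFun n m0 hm σ τ i : ℕ) < n := by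
  rw [joinFun_lt hm σ τ i hi]
  have := (σ ⟨i, hi⟩).2
  omega

lemma joinFun_gt_range (hm : m0 ≤ n) (σ : Equiv.Perm (Fin m0)) (τ : Equiv.Perm (Fin (n - m0)))
    (i : Fin (n+1)) (hi : m0 < (i : ℕ)) :
    (joinFun n m0 hm σ τ i : ℕ) < n - m0 := by
  rw [joinFun_gt hm σ τ i hi]
  exact (τ _).2

lemma joinFun_injective (hm : m0 ≤ n) (σ : Equiv.Perm (Fin m0)) (τ : Equiv.Perm (Fin (n - m0))) :
    Function.Injective (joinFun n m0 hm σ τ) := by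
  intro i j hij
  have hv : (joinFun n m0 hm σ τ i : ℕ) = (joinFun n m0 hm σ τ j : ℕ) := by rw [hij]
  rcases lt_trichotomy (i : ℕ) m0 with hi | hi | hi <;>
    rcases lt_trichotomy (j : ℕ) m0 with hj | hj | hj
  · rw [joinFun_lt hm σ τ i hi, joinFun_lt hm σ τ j hj] at hv
    have := σ.injective (Fin.ext (by omega : ((σ ⟨i, hi⟩ : Fin m0) : ℕ) = (σ ⟨j, hj⟩ : ℕ)))
    exact Fin.ext (by simpa [Fin.ext_iff] using this)
  · have h1 := joinFun_lt_range hm σ τ i hi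
    rw [joinFun_eq hm σ τ j hj] at hv; omega
  · have h1 := joinFun_lt_range hm σ τ i hi
    have h2 := joinFun_gt_range hm σ τ j hj
    have := (σ ⟨i, hi⟩).2
    omega
  · have h1 := joinFun_lt_range hm σ τ j hj
    rw [joinFun_eq hm σ τ i hi] at hv; omega
  · exact Fin.ext (by omega)
  · have h2 := joinFun_gt_range hm σ τ j hj
    rw [joinFun_eq hm σ τ i hi] at hv; omega
  · have h1 := joinFun_lt_range hm σ τ j hj
    have h2 := joinFun_gt_range hm σ τ i hi
    omega
  · have h2 := joinFun_gt_range hm σ τ i hi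
    rw [joinFun_eq hm σ τ j hj] at hv; omega
  · rw [joinFun_gt hm σ τ i hi, joinFun_gt hm σ τ j hj] at hv
    have := τ.injective (Fin.ext hv)
    rw [Fin.ext_iff] at this
    simp only at this
    exact Fin.ext (by omega)

noncomputable def joinPerm (hm : m0 ≤ n) (σ : Equiv.Perm (Fin m0)) (τ : Equiv.Perm (Fin (n - m0))) :
    Equiv.Perm (Fin (n+1)) :=
  Equiv.ofBijective _ (Finite.injective_iff_bijective.mp (joinFun_injective hm σ τ))

lemma joinPerm_apply (hm : m0 ≤ n) (σ : Equiv.Perm (Fin m0)) (τ : Equiv.Perm (Fin (n - m0)))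
    (i : Fin (n+1)) : joinPerm hm σ τ i = joinFun n m0 hm σ τ i := rfl

lemma av_join (hm : m0 ≤ n) (σ : Equiv.Perm (Fin m0)) (τ : Equiv.Perm (Fin (n - m0))) :
    Avoids132 (joinFun n m0 hm σ τ) ↔ Avoids132 ⇑σ ∧ Avoids132 ⇑τ := by
  have key : (∃ i j k : Fin (n+1), i < j ∧ j < k ∧
        joinFun n m0 hm σ τ i < joinFun n m0 hm σ τ k ∧
        joinFun n m0 hm σ τ k < joinFun n m0 hm σ τ j) ↔
      ((∃ i j k : Fin m0, i < j ∧ j < k ∧ σ i < σ k ∧ σ k < σ j) ∨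
       (∃ i j k : Fin (n - m0), i < j ∧ j < k ∧ τ i < τ k ∧ τ k < τ j)) := by
    constructor
    · rintro ⟨i, j, k, hij, hjk, h1, h2⟩
      rw [Fin.lt_def] at hij hjk h1 h2
      rcases lt_trichotomy (k : ℕ) m0 with hk | hk | hk
      · have hj : (j : ℕ) < m0 := by omega
        have hi : (i : ℕ) < m0 := by omega
        left
        refine ⟨⟨i, hi⟩, ⟨j, hj⟩, ⟨k, hk⟩, Fin.mk_lt_mk.mpr hij, Fin.mk_lt_mk.mpr hjk,
          ?_, ?_⟩ <;> rw [Fin.lt_def]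
        · have e1 := joinFun_lt hm σ τ i hi
          have e2 := joinFun_lt hm σ τ k hk
          omega
        · have e1 := joinFun_lt hm σ τ k hk
          have e2 := joinFun_lt hm σ τ j hj
          omega
      · have e1 := joinFun_eq hm σ τ k hk
        have := (joinFun n m0 hm σ τ j).2
        omega
      · have hkr := joinFun_gt_range hm σ τ k hk
        have hi : m0 < (i : ℕ) := by
          rcases lt_trichotomy (i : ℕ) m0 with hi | hi | hi
          · have := (joinFun_lt_range hm σ τ i hi).1; omega
          · have := joinFun_eq hm σ τ i hi
            have := (joinFun n m0 hm σ τ k).2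
            omega
          · exact hi
        have hj : m0 < (j : ℕ) := by omega
        right
        refine ⟨⟨(i : ℕ) - (m0+1), by have := i.2; omega⟩,
          ⟨(j : ℕ) - (m0+1), by have := j.2; omega⟩,
          ⟨(k : ℕ) - (m0+1), by have := k.2; omega⟩,
          Fin.mk_lt_mk.mpr (by omega), Fin.mk_lt_mk.mpr (by omega), ?_, ?_⟩ <;>
          rw [Fin.lt_def]
        · have e1 := joinFun_gt hm σ τ i hi
          have e2 := joinFun_gt hm σ τ k hk
          omega
        · have e1 := joinFun_gt hm σ τ k hk
          have e2 := joinFun_gt hm σ τ j hj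
          omega
    · rintro (⟨i, j, k, hij, hjk, h1, h2⟩ | ⟨i, j, k, hij, hjk, h1, h2⟩)
      · rw [Fin.lt_def] at hij hjk h1 h2
        have hin : ∀ a : Fin m0, (a : ℕ) < n + 1 := fun a => by have := a.2; omega
        have hval : ∀ a : Fin m0,
            (joinFun n m0 hm σ τ ⟨a, hin a⟩ : ℕ) = (σ a : ℕ) + (n - m0) := by
          intro a
          rw [joinFun_lt hm σ τ _ (by exact a.2)]
        refine ⟨⟨i, hin i⟩, ⟨j, hin j⟩, ⟨k, hin k⟩, Fin.mk_lt_mk.mpr hij,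
          Fin.mk_lt_mk.mpr hjk, ?_, ?_⟩ <;> rw [Fin.lt_def]
        · rw [hval i, hval k]; omega
        · rw [hval k, hval j]; omega
      · rw [Fin.lt_def] at hij hjk h1 h2
        have hin : ∀ a : Fin (n - m0), m0 + 1 + (a : ℕ) < n + 1 := fun a => by
          have := a.2; omega
        have hval : ∀ a : Fin (n - m0),
            (joinFun n m0 hm σ τ ⟨m0 + 1 + (a : ℕ), hin a⟩ : ℕ) = (τ a : ℕ) := by
          intro a
          rw [joinFun_gt hm σ τ _ (by simp; omega)]
          congr 1
          exact Fin.ext (by simp)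
        refine ⟨⟨m0 + 1 + (i : ℕ), hin i⟩, ⟨m0 + 1 + (j : ℕ), hin j⟩,
          ⟨m0 + 1 + (k : ℕ), hin k⟩, Fin.mk_lt_mk.mpr (by omega),
          Fin.mk_lt_mk.mpr (by omega), ?_, ?_⟩ <;> rw [Fin.lt_def]
        · rw [hval i, hval k]; omega
        · rw [hval k, hval j]; omega
  unfold Avoids132
  rw [key, not_or]

lemma chain_join (hm : m0 ≤ n) (σ : Equiv.Perm (Fin m0)) (τ : Equiv.Perm (Fin (n - m0)))
    (h : ℕ) :
    (∃ g : Fin (h+2) → Fin (n+1), StrictMono g ∧ StrictMono (joinFun n m0 hm σ τ ∘ g)) ↔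
      ((∃ f : Fin (h+1) → Fin m0, StrictMono f ∧ StrictMono (⇑σ ∘ f)) ∨
       (∃ f : Fin (h+2) → Fin (n - m0), StrictMono f ∧ StrictMono (⇑τ ∘ f))) := by
  constructor
  · rintro ⟨g, hg, hjg⟩
    have hmono : ∀ a b : Fin (h+2), (a : ℕ) < (b : ℕ) →
        (joinFun n m0 hm σ τ (g a) : ℕ) < (joinFun n m0 hm σ τ (g b) : ℕ) := by
      intro a b hab
      exact hjg (by rwa [Fin.lt_def])
    have hgmono : ∀ a b : Fin (h+2), (a : ℕ) < (b : ℕ) → (g a : ℕ) < (g b : ℕ) := by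
      intro a b hab
      exact hg (by rwa [Fin.lt_def])
    rcases lt_trichotomy (g 0 : ℕ) m0 with h0 | h0 | h0
    · -- all but possibly last land in left block
      have hcl : ∀ i : Fin (h+2), (i : ℕ) < h+1 → (g i : ℕ) < m0 := by
        intro i hi
        by_contra hge
        push_neg at hge
        rcases Nat.eq_or_lt_of_le hge with heq | hgt
        · -- g i = m0, value n, but must be below a later value
          have e := joinFun_eq hm σ τ (g i) heq.symm
          have hlast := hmono i ⟨h+1, by omega⟩ (by simpa using hi)
          have := (joinFun n m0 hm σ τ (g ⟨h+1, by omega⟩)).2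
          omega
        · -- g i > m0 but g 0 < m0: contradiction with monotone values
          have hi0 : (0 : ℕ) < (i : ℕ) := by
            rcases Nat.eq_zero_or_pos (i : ℕ) with hz | hz
            · exfalso
              have : g i = g 0 := by congr 1; exact Fin.ext hz
              omega
            · exact hz
          have hv := hmono 0 i (by simpa using hi0)
          have r0 := (joinFun_lt_range hm σ τ (g 0) h0).1
          have ri := joinFun_gt_range hm σ τ (g i) hgt
          omega
      left
      refine ⟨fun i => ⟨(g ⟨i, by omega⟩ : ℕ), hcl _ (by simpa using i.2)⟩, ?_, ?_⟩
      · intro a b hab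
        rw [Fin.lt_def] at hab ⊢
        exact hgmono _ _ (by simpa using hab)
      · intro a b hab
        rw [Fin.lt_def] at hab
        have hab' : ((⟨(a : ℕ), by omega⟩ : Fin (h+2)) : ℕ) <
            ((⟨(b : ℕ), by omega⟩ : Fin (h+2)) : ℕ) := by simpa using hab
        have hv := hmono _ _ hab'
        have e1 := joinFun_lt hm σ τ (g ⟨(a : ℕ), by omega⟩) (hcl _ (by simpa using a.2))
        have e2 := joinFun_lt hm σ τ (g ⟨(b : ℕ), by omega⟩) (hcl _ (by simpa using b.2))
        show σ _ < σ _
        rw [Fin.lt_def]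
        simp only [Function.comp] at *
        omega
    · -- g 0 = m0 : impossible
      exfalso
      have e := joinFun_eq hm σ τ (g 0) h0
      have hv := hmono 0 ⟨1, by omega⟩ (by simp)
      have := (joinFun n m0 hm σ τ (g ⟨1, by omega⟩)).2
      omega
    · -- all land in right block
      have hcl : ∀ i : Fin (h+2), m0 < (g i : ℕ) := by
        intro i
        rcases Nat.eq_zero_or_pos (i : ℕ) with hz | hz
        · have : g i = g 0 := by congr 1; exact Fin.ext hz
          omega
        · have := hgmono 0 i (by simpa using hz)
          omega
      right
      refine ⟨fun i => ⟨(g i : ℕ) - (m0+1), by have := (g i).2; have := hcl i; omega⟩, ?_, ?_⟩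
      · intro a b hab
        rw [Fin.lt_def] at hab ⊢
        have := hgmono a b (by simpa using hab)
        have := hcl a
        have := hcl b
        simp only
        omega
      · intro a b hab
        rw [Fin.lt_def] at hab
        have hv := hmono a b (by simpa using hab)
        have e1 := joinFun_gt hm σ τ (g a) (hcl a)
        have e2 := joinFun_gt hm σ τ (g b) (hcl b)
        show τ _ < τ _
        rw [Fin.lt_def]
        have r1 : (τ ⟨(g a : ℕ) - (m0+1), by have := (g a).2; have := hcl a; omega⟩ : ℕ) =
            (joinFun n m0 hm σ τ (g a) : ℕ) := e1.symm
        have r2 : (τ ⟨(g b : ℕ) - (m0+1), by have := (g b).2; have := hcl b; omega⟩ : ℕ) =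
            (joinFun n m0 hm σ τ (g b) : ℕ) := e2.symm
        simp only [Function.comp] at *
        omega
  · rintro (⟨f, hf, hsf⟩ | ⟨f, hf, hsf⟩)
    · -- extend σ-chain by the maximum at position m0
      have hfm : ∀ i : Fin (h+1), (f i : ℕ) < m0 := fun i => (f i).2
      refine ⟨fun i => if hi : (i : ℕ) < h+1 then ⟨(f ⟨i, hi⟩ : ℕ), by
          have := hfm ⟨i, hi⟩; omega⟩ else ⟨m0, by omega⟩, ?_, ?_⟩
      · intro a b hab
        rw [Fin.lt_def] at hab ⊢
        rcases Nat.lt_or_ge (b : ℕ) (h+1) with hb | hb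
        · have ha : (a : ℕ) < h+1 := by omega
          beta_reduce
          rw [dif_pos ha, dif_pos hb]
          have := hf (show (⟨(a : ℕ), ha⟩ : Fin (h+1)) < ⟨(b : ℕ), hb⟩ from
            Fin.mk_lt_mk.mpr hab)
          rw [Fin.lt_def] at this
          simpa using this
        · have ha : (a : ℕ) < h+1 := by have := b.2; omega
          beta_reduce
          rw [dif_pos ha, dif_neg (by omega)]
          simpa using hfm ⟨a, ha⟩
      · intro a b hab
        rw [Fin.lt_def] at hab
        show (joinFun n m0 hm σ τ _ : ℕ) < (joinFun n m0 hm σ τ _ : ℕ)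
        rcases Nat.lt_or_ge (b : ℕ) (h+1) with hb | hb
        · have ha : (a : ℕ) < h+1 := by omega
          beta_reduce
          rw [dif_pos ha, dif_pos hb]
          have e1 := joinFun_lt hm σ τ ⟨(f ⟨a, ha⟩ : ℕ), by have := hfm ⟨a, ha⟩; omega⟩
            (by simpa using hfm ⟨a, ha⟩)
          have e2 := joinFun_lt hm σ τ ⟨(f ⟨b, hb⟩ : ℕ), by have := hfm ⟨b, hb⟩; omega⟩
            (by simpa using hfm ⟨b, hb⟩)
          simp only [Fin.eta] at e1 e2
          have := hsf (show (⟨(a : ℕ), ha⟩ : Fin (h+1)) < ⟨(b : ℕ), hb⟩ from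
            Fin.mk_lt_mk.mpr hab)
          rw [Fin.lt_def] at this
          simp only [Function.comp] at this
          omega
        · have ha : (a : ℕ) < h+1 := by have := b.2; omega
          beta_reduce
          rw [dif_pos ha, dif_neg (by omega)]
          have e1 := joinFun_lt hm σ τ ⟨(f ⟨a, ha⟩ : ℕ), by have := hfm ⟨a, ha⟩; omega⟩
            (by simpa using hfm ⟨a, ha⟩)
          have e2 := joinFun_eq hm σ τ ⟨m0, by omega⟩ (by simp)
          have := (σ (f ⟨a, ha⟩)).2
          simp only [Fin.eta] at e1
          omega
    · -- shift τ-chain to the right block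
      have hin : ∀ a : Fin (h+2), m0 + 1 + ((f a : Fin (n - m0)) : ℕ) < n + 1 := fun a => by
        have := (f a).2; omega
      refine ⟨fun i => ⟨m0 + 1 + (f i : ℕ), by have := (f i).2; omega⟩, ?_, ?_⟩
      · intro a b hab
        rw [Fin.lt_def]
        have := hf hab
        rw [Fin.lt_def] at this
        simp only
        omega
      · intro a b hab
        show (joinFun n m0 hm σ τ _ : ℕ) < (joinFun n m0 hm σ τ _ : ℕ)
        have e1 := joinFun_gt hm σ τ ⟨m0 + 1 + (f a : ℕ), by have := (f a).2; omega⟩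
          (by simp only [Fin.val_mk]; omega)
        have e2 := joinFun_gt hm σ τ ⟨m0 + 1 + (f b : ℕ), by have := (f b).2; omega⟩
          (by simp only [Fin.val_mk]; omega)
        have hva : (τ ⟨(↑(⟨m0 + 1 + (f a : ℕ), by have := (f a).2; omega⟩ : Fin (n+1)) : ℕ)
            - (m0+1), by have := (f a).2; simp only [Fin.val_mk]; omega⟩ : ℕ) = (τ (f a) : ℕ) := by
          congr 1
          exact Fin.ext (by simp)
        have hvb : (τ ⟨(↑(⟨m0 + 1 + (f b : ℕ), by have := (f b).2; omega⟩ : Fin (n+1)) : ℕ)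
            - (m0+1), by have := (f b).2; simp only [Fin.val_mk]; omega⟩ : ℕ) = (τ (f b) : ℕ) := by
          congr 1
          exact Fin.ext (by simp)
        have := hsf hab
        rw [Fin.lt_def] at this
        simp only [Function.comp] at this ⊢
        omega

private def PS (N h : ℕ) : Type := {π : Equiv.Perm (Fin N) // Avoids132 ⇑π ∧ NoInc (h+1) N ⇑π}

instance finPS (N h : ℕ) : Finite (PS N h) := by unfold PS; infer_instance

lemma noInc_join (hm : m0 ≤ n) (σ : Equiv.Perm (Fin m0)) (τ : Equiv.Perm (Fin (n - m0)))
    (h : ℕ) :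
    NoInc (h+2) (n+1) (joinFun n m0 hm σ τ) ↔
      NoInc (h+1) m0 ⇑σ ∧ NoInc (h+2) (n - m0) ⇑τ := by
  unfold NoInc
  rw [show (h+2) = (h+1)+1 from rfl] at *
  rw [chain_join hm σ τ h, not_or]

lemma le_card_of_inj {s c : ℕ} (v : Fin s → ℕ) (hinj : ∀ a b, v a = v b → a = b)
    (hlt : ∀ a, v a < c) : s ≤ c := by
  have hi : Function.Injective (fun a : Fin s => (⟨v a, hlt a⟩ : Fin c)) := fun a b hab =>
    hinj a b (by simpa [Fin.ext_iff] using hab)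
  simpa using Fintype.card_le_of_injective _ hi

noncomputable def permJoin (n h : ℕ) (x : Σ m : Fin (n+1), PS m h × PS (n - m) (h+1)) :
    PS (n+1) (h+1) :=
  have hm : ((x.1 : ℕ)) ≤ n := by have := x.1.2; omega
  ⟨joinPerm hm x.2.1.1 x.2.2.1,
    (av_join hm x.2.1.1 x.2.2.1).mpr ⟨x.2.1.2.1, x.2.2.2.1⟩,
    (noInc_join hm x.2.1.1 x.2.2.1 h).mpr ⟨x.2.1.2.2, x.2.2.2.2⟩⟩

set_option maxHeartbeats 1000000 in
lemma permJoin_bijective (n h : ℕ) : Function.Bijective (permJoin n h) := by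
  constructor
  · rintro ⟨m, ⟨σ, hσ⟩, ⟨τ, hτ⟩⟩ ⟨m', ⟨σ', hσ'⟩, ⟨τ', hτ'⟩⟩ he
    have hmm : (m : ℕ) ≤ n := by have := m.2; omega
    have hmm' : (m' : ℕ) ≤ n := by have := m'.2; omega
    have h1 : ⇑(permJoin n h ⟨m, ⟨σ, hσ⟩, ⟨τ, hτ⟩⟩).1 = joinFun n m hmm σ τ := rfl
    have h2 : ⇑(permJoin n h ⟨m', ⟨σ', hσ'⟩, ⟨τ', hτ'⟩⟩).1 = joinFun n m' hmm' σ' τ' := rfl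
    have hfun : ∀ i, joinFun n m hmm σ τ i = joinFun n m' hmm' σ' τ' i := by
      intro i
      rw [← h1, ← h2, he]
    have hm : m = m' := by
      by_contra hne
      rcases Ne.lt_or_gt (fun e => hne (Fin.ext e) : (m : ℕ) ≠ (m' : ℕ)) with hlt | hlt
      · have e1 := joinFun_eq hmm σ τ ⟨m, by omega⟩ (by simp)
        have e2 := joinFun_lt_range hmm' σ' τ' ⟨m, by omega⟩ (by simpa using hlt)
        rw [hfun ⟨m, by omega⟩] at e1
        omega
      · have e1 := joinFun_eq hmm' σ' τ' ⟨m', by omega⟩ (by simp)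
        have e2 := joinFun_lt_range hmm σ τ ⟨m', by omega⟩ (by simpa using hlt)
        rw [← hfun ⟨m', by omega⟩] at e1
        omega
    subst hm
    have hσe : σ = σ' := by
      apply Equiv.ext
      intro i
      have hi : (i : ℕ) < (m : ℕ) := i.2
      have hin : (i : ℕ) < n + 1 := by omega
      have e1 := joinFun_lt hmm σ τ ⟨i, hin⟩ (by simpa using hi)
      have e2 := joinFun_lt hmm σ' τ' ⟨i, hin⟩ (by simpa using hi)
      rw [hfun ⟨i, hin⟩] at e1
      simp only [Fin.eta] at e1 e2
      exact Fin.ext (by omega)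
    have hτe : τ = τ' := by
      apply Equiv.ext
      intro j
      have hj : (j : ℕ) < n - (m : ℕ) := j.2
      have hin : (m : ℕ) + 1 + (j : ℕ) < n + 1 := by omega
      have hgt : (m : ℕ) < ((⟨(m : ℕ) + 1 + (j : ℕ), hin⟩ : Fin (n+1)) : ℕ) := by
        simp only [Fin.val_mk]; omega
      have e1 := joinFun_gt hmm σ τ ⟨(m : ℕ) + 1 + (j : ℕ), hin⟩ hgt
      have e2 := joinFun_gt hmm σ' τ' ⟨(m : ℕ) + 1 + (j : ℕ), hin⟩ hgt
      rw [hfun _] at e1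
      have hjj : (⟨((⟨(m : ℕ) + 1 + (j : ℕ), hin⟩ : Fin (n+1)) : ℕ) - ((m : ℕ)+1), by
          simp only [Fin.val_mk]; omega⟩ : Fin (n - (m : ℕ))) = j :=
        Fin.ext (by simp only [Fin.val_mk]; omega)
      rw [hjj] at e1 e2
      exact Fin.ext (by omega)
    subst hσe
    subst hτe
    rfl
  · rintro ⟨π, hav, hni⟩
    set M : Fin (n+1) := π.symm ⟨n, by omega⟩ with hM
    have hπM : π M = ⟨n, by omega⟩ := Equiv.apply_symm_apply π _
    have hMn : (M : ℕ) ≤ n := by have := M.2; omega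
    have hvne : ∀ i : Fin (n+1), i ≠ M → (π i : ℕ) < n := by
      intro i hi
      have h1 : (π i : ℕ) ≤ n := by have := (π i).2; omega
      rcases Nat.eq_or_lt_of_le h1 with he | hlt
      · exact absurd (π.injective (hπM ▸ Fin.ext he : π i = π M)) hi
      · exact hlt
    have C1 : ∀ i j : Fin (n+1), (i : ℕ) < (M : ℕ) → (M : ℕ) < (j : ℕ) →
        (π j : ℕ) < (π i : ℕ) := by
      intro i j hi hj
      by_contra hc
      push_neg at hc
      have hne : (π i : ℕ) ≠ (π j : ℕ) := fun e =>
        (by omega : (i : ℕ) ≠ (j : ℕ)) (by simpa [Fin.ext_iff] using π.injective (Fin.ext e))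
      have hjn : (π j : ℕ) < n := hvne j (fun e => by rw [e] at hj; omega)
      exact hav ⟨i, M, j, Fin.lt_def.mpr hi, Fin.lt_def.mpr hj,
        Fin.lt_def.mpr (by omega), Fin.lt_def.mpr (by rw [hπM]; simpa using hjn)⟩
    have C2 : ∀ i : Fin (n+1), (i : ℕ) < (M : ℕ) → n - (M : ℕ) ≤ (π i : ℕ) := by
      intro i hi
      apply le_card_of_inj (fun j : Fin (n - (M : ℕ)) =>
        (π ⟨(M : ℕ) + 1 + (j : ℕ), by have := j.2; omega⟩ : ℕ))
      · intro a b hab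
        have := π.injective (Fin.ext hab)
        simp only [Fin.mk.injEq] at this
        exact Fin.ext (by omega)
      · intro a
        apply C1 i _ hi
        simp only [Fin.val_mk]
        omega
    have C3 : ∀ j : Fin (n+1), (M : ℕ) < (j : ℕ) → (π j : ℕ) < n - (M : ℕ) := by
      intro j hj
      have hjn : (π j : ℕ) < n := hvne j (fun e => by rw [e] at hj; omega)
      have habove : ∀ i : Fin ((M : ℕ) + 1),
          (π j : ℕ) < (π ⟨(i : ℕ), by have := i.2; omega⟩ : ℕ) := by
        intro i
        rcases Nat.lt_or_ge ((i : ℕ)) (M : ℕ) with hi | hi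
        · exact C1 _ j hi hj
        · have h' : (⟨(i : ℕ), by have := i.2; omega⟩ : Fin (n+1)) = M :=
            Fin.ext (by have := i.2; simp only [Fin.val_mk]; omega)
          rw [h', hπM]
          simpa using hjn
      have hcard : (M : ℕ) + 1 ≤ n - (π j : ℕ) := by
        apply le_card_of_inj (fun i : Fin ((M : ℕ) + 1) =>
          (π ⟨(i : ℕ), by have := i.2; omega⟩ : ℕ) - (π j : ℕ) - 1)
        · intro a b hab
          have ha := habove a
          have hb := habove b
          have := π.injective (Fin.ext (by omega :
            (π ⟨(a : ℕ), by have := a.2; omega⟩ : ℕ) = (π ⟨(b : ℕ), by have := b.2; omega⟩ : ℕ)))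
          simp only [Fin.mk.injEq] at this
          exact Fin.ext this
        · intro a
          have ha := habove a
          have : (π ⟨(a : ℕ), by have := a.2; omega⟩ : ℕ) ≤ n := by
            have := (π ⟨(a : ℕ), by have := a.2; omega⟩).2; omega
          omega
      omega
    -- build σ and τ
    have hembne : ∀ i : Fin (n+1), (i : ℕ) < (M : ℕ) → i ≠ M := fun i hi e => by
      rw [e] at hi; omega
    have hσpf : ∀ i : Fin (M : ℕ),
        (π ⟨(i : ℕ), by have := i.2; omega⟩ : ℕ) - (n - (M : ℕ)) < (M : ℕ) := by
      intro i
      have h2 := hvne ⟨(i : ℕ), by have := i.2; omega⟩ (hembne _ (by simpa using i.2))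
      have := i.2
      omega
    set σf : Fin (M : ℕ) → Fin (M : ℕ) := fun i =>
      ⟨(π ⟨(i : ℕ), by have := i.2; omega⟩ : ℕ) - (n - (M : ℕ)), hσpf i⟩ with hσf
    have hσinj : Function.Injective σf := by
      intro a b hab
      rw [hσf] at hab
      simp only [Fin.mk.injEq] at hab
      have h2a := C2 ⟨(a : ℕ), by have := a.2; omega⟩ (by simpa using a.2)
      have h2b := C2 ⟨(b : ℕ), by have := b.2; omega⟩ (by simpa using b.2)
      have := π.injective (Fin.ext (by omega :
        (π ⟨(a : ℕ), by have := a.2; omega⟩ : ℕ) = (π ⟨(b : ℕ), by have := b.2; omega⟩ : ℕ)))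
      simp only [Fin.mk.injEq] at this
      exact Fin.ext this
    set σp : Equiv.Perm (Fin (M : ℕ)) :=
      Equiv.ofBijective σf (Finite.injective_iff_bijective.mp hσinj) with hσp
    set τf : Fin (n - (M : ℕ)) → Fin (n - (M : ℕ)) := fun j =>
      ⟨(π ⟨(M : ℕ) + 1 + (j : ℕ), by have := j.2; omega⟩ : ℕ),
        C3 _ (by simp only [Fin.val_mk]; omega)⟩ with hτf
    have hτinj : Function.Injective τf := by
      intro a b hab
      rw [hτf] at hab
      simp only [Fin.mk.injEq] at hab
      have := π.injective (Fin.ext hab)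
      simp only [Fin.mk.injEq] at this
      exact Fin.ext (by omega)
    set τp : Equiv.Perm (Fin (n - (M : ℕ))) :=
      Equiv.ofBijective τf (Finite.injective_iff_bijective.mp hτinj) with hτp
    have hjoin : joinFun n (M : ℕ) hMn σp τp = ⇑π := by
      funext i
      rcases lt_trichotomy (i : ℕ) (M : ℕ) with hi | hi | hi
      · apply Fin.ext
        rw [joinFun_lt hMn σp τp i hi]
        show ((π ⟨(i : ℕ), by have := i.2; omega⟩ : ℕ) - (n - (M : ℕ))) + (n - (M : ℕ)) =
          (π i : ℕ)
        have h1 := C2 i hi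
        have heq : (⟨(i : ℕ), by have := i.2; omega⟩ : Fin (n+1)) = i := Fin.ext rfl
        rw [heq]
        omega
      · apply Fin.ext
        rw [joinFun_eq hMn σp τp i hi]
        have heq : i = M := Fin.ext hi
        rw [heq, hπM]
      · apply Fin.ext
        rw [joinFun_gt hMn σp τp i hi]
        show (π ⟨(M : ℕ) + 1 + ((i : ℕ) - ((M : ℕ)+1)), by have := i.2; omega⟩ : ℕ) =
          (π i : ℕ)
        exact congrArg Fin.val (congrArg π (Fin.ext (by simp only [Fin.val_mk]; omega)))
    have hav' : Avoids132 (joinFun n (M : ℕ) hMn σp τp) := by rw [hjoin]; exact hav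
    obtain ⟨hA, hB⟩ := (av_join hMn σp τp).mp hav'
    have hni' : NoInc (h+2) (n+1) (joinFun n (M : ℕ) hMn σp τp) := by rw [hjoin]; exact hni
    obtain ⟨hC, hD⟩ := (noInc_join hMn σp τp h).mp hni'
    refine ⟨⟨M, ⟨σp, hA, hC⟩, ⟨τp, hB, hD⟩⟩, ?_⟩
    apply Subtype.ext
    apply Equiv.ext
    intro i
    exact congrFun hjoin i

lemma perm_card : ∀ N h, Nat.card (PS N h) = cnt N h := by
  intro N
  induction N using Nat.strong_induction_on with
  | _ N IH =>
  match N with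
  | 0 =>
    intro h
    rw [cnt_zero, Nat.card_eq_one_iff_unique]
    constructor
    · constructor
      rintro ⟨p, -⟩ ⟨q, -⟩
      have : p = q := Equiv.ext fun i => i.elim0
      subst this; rfl
    · exact ⟨Equiv.refl _, fun ⟨i, _⟩ => i.elim0, fun ⟨f, _, _⟩ => (f 0).elim0⟩
  | N + 1 =>
    intro h
    match h with
    | 0 =>
      rw [cnt_succ_zero]
      have : IsEmpty (PS (N+1) 0) := by
        constructor
        rintro ⟨π, -, hni⟩
        apply hni
        refine ⟨fun _ => 0, ?_, ?_⟩ <;>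
          exact fun a b hab => absurd (Fin.lt_def.mp hab)
            (by have := a.2; have := b.2; omega)
      exact Nat.card_of_isEmpty
    | h + 1 =>
      classical
      rw [← Nat.card_eq_of_bijective _ (permJoin_bijective N h)]
      letI : ∀ a b, Fintype (PS a b) := fun a b => Fintype.ofFinite _
      rw [Nat.card_eq_fintype_card, Fintype.card_sigma]
      simp_rw [Fintype.card_prod, ← Nat.card_eq_fintype_card]
      rw [cnt_succ_succ,
        ← Fin.sum_univ_eq_sum_range (fun m => cnt (min m N) h * cnt (N - m) (h+1))]
      apply Finset.sum_congr rfl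
      intro m _
      have hm : (m : ℕ) ≤ N := by omega
      rw [min_eq_left hm]
      have h1 : Nat.card (PS (↑m) h) = cnt (↑m) h := IH m (by omega) h
      have h2 : Nat.card (PS (N - ↑m) (h+1)) = cnt (N - ↑m) (h+1) := IH (N - m) (by omega) (h+1)
      rw [h1, h2]

theorem count_av132_id_eq_bounded_dyck (n k : ℕ) (hk : 1 ≤ k) :
    Nat.card {π : Equiv.Perm (Fin n) // Avoids132 ⇑π ∧
        ¬ ∃ f : Fin k → Fin n, StrictMono f ∧ StrictMono (⇑π ∘ f)} =
      Nat.card {l : List Bool // l.length = 2 * n ∧ IsDyckWord l ∧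
        ∀ m, (l.take m).count true ≤ (l.take m).count false + (k - 1)} := by
  obtain ⟨h, rfl⟩ : ∃ h, k = h + 1 := ⟨k - 1, by omega⟩
  have hL : Nat.card {π : Equiv.Perm (Fin n) // Avoids132 ⇑π ∧
      ¬ ∃ f : Fin (h+1) → Fin n, StrictMono f ∧ StrictMono (⇑π ∘ f)} = cnt n h :=
    perm_card n h
  rw [hL, show h + 1 - 1 = h by omega]
  exact (bool_card n h).symm
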